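/- If every string in L appears in the sample set S (i.e., L ⊆ S), then c̃_S = c on all prefixes in L_prefix, and consequently the ASAp sampling distribution Q̃_S, defined by left-to-right conditionals Q̃_S(w_i | w_{1:i-1}) = P(w_i | w_{1:i-1})·c̃_S(w_{1:i}) / Σ_{w'} P(w' | w_{1:i-1})·c̃_S(w_{1:i-1}w'), equals the exact grammar-aligned distribution Q. -/
import Mathlib


open scoped BigOperators
open Finset Filter

namespace GAD

/-- Marginal probability of the prefix `u` under a distribution `P` on length-`n` strings. -/
noncomputable def marg {α : Type*} [Fintype α] (n : ℕ) (P : List α → ℝ) (u : List α) : ℝ :=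
  ∑ v : Fin (n - u.length) → α, P (u ++ List.ofFn v)

/-- Marginal probability mass of completions of `u` that land in the language `L`. -/
noncomputable def margL {α : Type*} [Fintype α] (n : ℕ) (P : List α → ℝ) (L : Set (List α))
    (u : List α) : ℝ :=
  ∑ v : Fin (n - u.length) → α, L.indicator P (u ++ List.ofFn v)

/-- Next-token conditional `P(a | u)`. -/
noncomputable def cond {α : Type*} [Fintype α] (n : ℕ) (P : List α → ℝ) (u : List α) (a : α) : ℝ :=
  marg n P (u ++ [a]) / marg n P u

/-- Expected future grammaticality `c(u) = Σ_v P(v | u) · 1[u ++ v ∈ L]`. -/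
noncomputable def efg {α : Type*} [Fintype α] (n : ℕ) (P : List α → ℝ) (L : Set (List α))
    (u : List α) : ℝ :=
  margL n P L u / marg n P u

/-- `u` is a prefix of some string of the language `L`. -/
def inPrefix {α : Type*} (L : Set (List α)) (u : List α) : Prop := ∃ v, u ++ v ∈ L

/-- Total probability mass of the language: `P(L)`. -/
noncomputable def PL {α : Type*} [Fintype α] (n : ℕ) (P : List α → ℝ) (L : Set (List α)) : ℝ :=
  margL n P L []

open Classical in
/-- ASAp approximation of expected future grammaticality, with fuel = remaining length. -/
noncomputable def ctildeAux {α : Type*} [Fintype α] (n : ℕ) (P : List α → ℝ) (L : Set (List α))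
    (S : Finset (List α)) : ℕ → List α → ℝ
  | 0, u => Set.indicator L (fun _ => (1 : ℝ)) u
  | (k + 1), u =>
      if ∃ s ∈ S, u <+: s then
        ∑ a : α, cond n P u a * ctildeAux n P L S k (u ++ [a])
      else Set.indicator {t | inPrefix L t} (fun _ => (1 : ℝ)) u

/-- ASAp overapproximation `c̃_S`. -/
noncomputable def ctilde {α : Type*} [Fintype α] (n : ℕ) (P : List α → ℝ) (L : Set (List α))
    (S : Finset (List α)) (u : List α) : ℝ :=
  ctildeAux n P L S (n - u.length) u

/-- The ASAp sampling distribution `Q̃_S`, as a product of reweighted left-to-right conditionals. -/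
noncomputable def QtildeS {α : Type*} [Fintype α] (n : ℕ) (P : List α → ℝ) (L : Set (List α))
    (S : Finset (List α)) (w : Fin n → α) : ℝ :=
  ∏ i : Fin n,
    cond n P ((List.ofFn w).take i) (w i) * ctilde n P L S ((List.ofFn w).take i ++ [w i]) /
      ∑ a : α, cond n P ((List.ofFn w).take i) a * ctilde n P L S ((List.ofFn w).take i ++ [a])

section Aux
set_option linter.unusedSectionVars false
set_option linter.unusedVariables false
variable {α : Type*} [Fintype α]

lemma exists_prefix_iff (L : Set (List α)) (S : Finset (List α))
    (hSL : ∀ w ∈ S, w ∈ L) (hLS : ∀ w ∈ L, w ∈ S) (u : List α) :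
    (∃ s ∈ S, u <+: s) ↔ inPrefix L u := by
  constructor
  · rintro ⟨s, hs, t, rfl⟩; exact ⟨t, hSL _ hs⟩
  · rintro ⟨v, hv⟩; exact ⟨u ++ v, hLS _ hv, v, rfl⟩

lemma ctildeAux_eq_zero (n : ℕ) (P : List α → ℝ) (L : Set (List α)) (S : Finset (List α))
    (hSL : ∀ w ∈ S, w ∈ L) (u : List α) (hu : ¬ inPrefix L u) (k : ℕ) :
    ctildeAux n P L S k u = 0 := by
  cases k with
  | zero =>
    rw [ctildeAux, Set.indicator_of_notMem]
    intro h; exact hu ⟨[], by simpa using h⟩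
  | succ k =>
    rw [ctildeAux, if_neg]
    · exact Set.indicator_of_notMem hu (fun _ => (1:ℝ))
    rintro ⟨s, hs, t, rfl⟩
    exact hu ⟨t, hSL _ hs⟩

lemma margL_eq_zero (n : ℕ) (P : List α → ℝ) (L : Set (List α)) (u : List α)
    (hu : ¬ inPrefix L u) : margL n P L u = 0 := by
  rw [margL]
  refine Finset.sum_eq_zero fun v _ => ?_
  exact Set.indicator_of_notMem (fun h => hu ⟨List.ofFn v, h⟩) _

lemma margL_nonneg (n : ℕ) (P : List α → ℝ) (L : Set (List α)) (hP : ∀ w, 0 ≤ P w)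
    (u : List α) : 0 ≤ margL n P L u :=
  Finset.sum_nonneg fun v _ => Set.indicator_nonneg (fun w _ => hP w) _

lemma sum_fin_zero (m : ℕ) (hm : m = 0) (f : (Fin m → α) → ℝ) :
    ∑ v : Fin m → α, f v = f (fun i => (Fin.cast hm i).elim0) := by
  haveI : IsEmpty (Fin m) := by rw [hm]; infer_instance
  exact Fintype.sum_unique f

lemma ofFn_nil (m : ℕ) (hm : m = 0) (v : Fin m → α) : List.ofFn v = [] :=
  List.eq_nil_of_length_eq_zero (by simp [hm])

lemma marg_full (n : ℕ) (P : List α → ℝ) (u : List α) (hu : u.length = n) :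
    marg n P u = P u := by
  rw [marg, sum_fin_zero (n - u.length) (by omega), ofFn_nil _ (by omega), List.append_nil]

lemma margL_full (n : ℕ) (P : List α → ℝ) (L : Set (List α)) (u : List α) (hu : u.length = n) :
    margL n P L u = L.indicator P u := by
  rw [margL, sum_fin_zero (n - u.length) (by omega), ofFn_nil _ (by omega), List.append_nil]


lemma sum_fun_cast {m m' : ℕ} (h : m = m') (f : (Fin m → α) → ℝ) :
    ∑ v : Fin m → α, f v = ∑ v : Fin m' → α, f (fun i => v (Fin.cast h i)) := by
  subst h; simp

lemma sum_ofFn_succ (u : List α) (mm : ℕ) (f : List α → ℝ) :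
    ∑ v : Fin (mm + 1) → α, f (u ++ List.ofFn v)
      = ∑ a : α, ∑ v : Fin mm → α, f (u ++ [a] ++ List.ofFn v) := by
  rw [← Equiv.sum_comp (Fin.consEquiv (fun _ : Fin (mm+1) => α))
    (fun v => f (u ++ List.ofFn v)), Fintype.sum_prod_type]
  refine Finset.sum_congr rfl fun a _ => Finset.sum_congr rfl fun v _ => ?_
  have : List.ofFn ((Fin.consEquiv (fun _ : Fin (mm+1) => α)) (a, v)) = a :: List.ofFn v := by
    simp [Fin.consEquiv, List.ofFn_succ]
  rw [this]
  simp

lemma ofFn_cast {m m' : ℕ} (h : m = m') (v : Fin m' → α) :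
    List.ofFn (fun i : Fin m => v (Fin.cast h i)) = List.ofFn v := by
  subst h; rfl

lemma margL_split (n : ℕ) (P : List α → ℝ) (L : Set (List α)) (u : List α) (hu : u.length < n) :
    margL n P L u = ∑ a : α, margL n P L (u ++ [a]) := by
  have h1 : n - u.length = (n - (u.length + 1)) + 1 := by omega
  rw [margL, sum_fun_cast h1]
  have : ∀ v : Fin ((n - (u.length + 1)) + 1) → α,
      L.indicator P (u ++ List.ofFn (fun i => v (Fin.cast h1 i)))
        = L.indicator P (u ++ List.ofFn v) := by
    intro v; rw [ofFn_cast h1]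
  rw [Finset.sum_congr rfl (fun v _ => this v), sum_ofFn_succ]
  refine Finset.sum_congr rfl fun a _ => ?_
  rw [margL]
  have h2 : n - (u ++ [a]).length = n - (u.length + 1) := by simp
  rw [sum_fun_cast h2]
  exact Finset.sum_congr rfl fun v _ => by rw [ofFn_cast h2]

lemma efg_eq_zero (n : ℕ) (P : List α → ℝ) (L : Set (List α)) (u : List α)
    (hu : ¬ inPrefix L u) : efg n P L u = 0 := by
  rw [efg, margL_eq_zero n P L u hu, zero_div]

lemma chain (x y z : ℝ) (hy : y ≠ 0) : (y / x) * (z / y) = z / x := by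
  rw [div_mul_div_comm, mul_comm y z, mul_div_mul_right _ _ hy]

lemma chain2 (a b m : ℝ) (hm : m ≠ 0) : (a / m) / (b / m) = a / b := by
  rw [div_div_div_comm, div_self hm, div_one]

lemma sum_cond_efg (n : ℕ) (P : List α → ℝ) (L : Set (List α))
    (hmarg : ∀ u : List α, u.length ≤ n → 0 < marg n P u)
    (u : List α) (hu : u.length < n) :
    ∑ a : α, cond n P u a * efg n P L (u ++ [a]) = efg n P L u := by
  have key : ∀ a : α, cond n P u a * efg n P L (u ++ [a])
      = margL n P L (u ++ [a]) / marg n P u := by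
    intro a
    rw [cond, efg]
    exact chain _ _ _ (hmarg (u ++ [a]) (by simp; omega)).ne'
  rw [Finset.sum_congr rfl (fun a _ => key a), ← Finset.sum_div,
    ← margL_split n P L u hu, efg]

lemma ctildeAux_eq_efg (n : ℕ) (P : List α → ℝ) (L : Set (List α)) (S : Finset (List α))
    (hL : ∀ w ∈ L, w.length = n) (hpos : ∀ w ∈ L, 0 < P w)
    (hSL : ∀ w ∈ S, w ∈ L) (hLS : ∀ w ∈ L, w ∈ S)
    (hmarg : ∀ u : List α, u.length ≤ n → 0 < marg n P u) :
    ∀ k (u : List α), u.length + k = n → ctildeAux n P L S k u = efg n P L u := by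
  intro k
  induction k with
  | zero =>
    intro u hu
    by_cases hpre : inPrefix L u
    · obtain ⟨v, hv⟩ := hpre
      have hv' : v = [] := by
        have := hL _ hv
        simp only [List.length_append] at this
        simpa using List.eq_nil_of_length_eq_zero (by omega)
      subst hv'
      rw [List.append_nil] at hv
      rw [ctildeAux, Set.indicator_of_mem hv, efg,
        marg_full n P u (by omega), margL_full n P L u (by omega),
        Set.indicator_of_mem hv, div_self (hpos _ hv).ne']
    · rw [ctildeAux_eq_zero n P L S hSL u hpre, efg_eq_zero n P L u hpre]
  | succ k ih =>
    intro u hu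
    by_cases hpre : inPrefix L u
    · rw [ctildeAux, if_pos ((exists_prefix_iff L S hSL hLS u).2 hpre)]
      rw [Finset.sum_congr rfl (fun a _ => by
        rw [ih (u ++ [a]) (by simp; omega)])]
      exact sum_cond_efg n P L hmarg u (by omega)
    · rw [ctildeAux_eq_zero n P L S hSL u hpre, efg_eq_zero n P L u hpre]

lemma ctilde_eq_efg (n : ℕ) (P : List α → ℝ) (L : Set (List α)) (S : Finset (List α))
    (hL : ∀ w ∈ L, w.length = n) (hpos : ∀ w ∈ L, 0 < P w)
    (hSL : ∀ w ∈ S, w ∈ L) (hLS : ∀ w ∈ L, w ∈ S)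
    (hmarg : ∀ u : List α, u.length ≤ n → 0 < marg n P u)
    (u : List α) (hu : u.length ≤ n) : ctilde n P L S u = efg n P L u :=
  ctildeAux_eq_efg n P L S hL hpos hSL hLS hmarg (n - u.length) u (by omega)

lemma margL_pos (n : ℕ) (P : List α → ℝ) (L : Set (List α))
    (hP : ∀ w, 0 ≤ P w) (hL : ∀ w ∈ L, w.length = n) (hpos : ∀ w ∈ L, 0 < P w)
    (u : List α) (hpre : inPrefix L u) (hu : u.length ≤ n) : 0 < margL n P L u := by
  obtain ⟨v, hv⟩ := hpre
  have hlen : n - u.length = v.length := by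
    have := hL _ hv; simp only [List.length_append] at this; omega
  rw [margL]
  refine Finset.sum_pos' (fun t _ => Set.indicator_nonneg (fun w _ => hP w) _)
    ⟨fun i => v.get (Fin.cast hlen i), Finset.mem_univ _, ?_⟩
  have h2 : List.ofFn (fun i : Fin (n - u.length) => v.get (Fin.cast hlen i)) = v := by
    rw [ofFn_cast hlen v.get, List.ofFn_get]
  rw [h2, Set.indicator_of_mem hv]
  exact hpos _ hv

lemma prod_div_telescope (g : ℕ → ℝ) (n : ℕ) (hg : ∀ i ≤ n, g i ≠ 0) :
    ∏ i ∈ Finset.range n, g (i + 1) / g i = g n / g 0 := by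
  induction n with
  | zero => simp [div_self (hg 0 le_rfl)]
  | succ n ih =>
    rw [Finset.prod_range_succ, ih (fun i hi => hg i (hi.trans n.le_succ)),
      chain (g 0) (g n) (g (n + 1)) (hg n n.le_succ)]

lemma take_succ_ofFn {n : ℕ} (w : Fin n → α) (i : Fin n) :
    (List.ofFn w).take (i + 1) = (List.ofFn w).take i ++ [w i] := by
  rw [List.take_succ]
  congr 1
  have : (List.ofFn w)[(i : ℕ)]? = some (w i) := by
    rw [List.getElem?_eq_getElem (by simp)]
    simp
  rw [this]
  rfl
end Aux

/-- If every string of `L` is in the sample set `S`, then `c̃_S = c` on all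
prefixes of `L`, and consequently the ASAp sampling distribution `Q̃_S` equals the exact
grammar-aligned distribution `Q = P(· | L)`. -/
theorem stmt8 {α : Type*} [Fintype α] (n : ℕ) (P : List α → ℝ) (L : Set (List α))
    (hP : ∀ w, 0 ≤ P w) (hL : ∀ w ∈ L, w.length = n) (hPL : 0 < PL n P L)
    (hpos : ∀ w ∈ L, 0 < P w)
    (S : Finset (List α)) (hSL : ∀ w ∈ S, w ∈ L) (hLS : ∀ w ∈ L, w ∈ S)
    (hmarg : ∀ u : List α, u.length ≤ n → 0 < marg n P u) :
    (∀ u : List α, inPrefix L u → u.length ≤ n → ctilde n P L S u = efg n P L u) ∧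
    (∀ w : Fin n → α, QtildeS n P L S w = L.indicator P (List.ofFn w) / PL n P L) := by
  constructor
  · intro u _ hu
    exact ctilde_eq_efg n P L S hL hpos hSL hLS hmarg u hu
  · intro w
    by_cases hw : List.ofFn w ∈ L
    · have htake : ∀ i : ℕ, i ≤ n → ((List.ofFn w).take i).length = i := by
        intro i hi; simp [List.length_take]; omega
      have hpre : ∀ i : ℕ, inPrefix L ((List.ofFn w).take i) :=
        fun i => ⟨(List.ofFn w).drop i, by rw [List.take_append_drop]; exact hw⟩
      set g : ℕ → ℝ := fun i => margL n P L ((List.ofFn w).take i) with hg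
      have hgne : ∀ i ≤ n, g i ≠ 0 := fun i hi =>
        (margL_pos n P L hP hL hpos _ (hpre i) (by rw [htake i hi]; exact hi)).ne'
      have hfac : ∀ i : Fin n,
          (cond n P ((List.ofFn w).take i) (w i) * ctilde n P L S ((List.ofFn w).take i ++ [w i]) /
            ∑ a : α, cond n P ((List.ofFn w).take i) a *
              ctilde n P L S ((List.ofFn w).take i ++ [a]))
          = g ((i : ℕ) + 1) / g i := by
        intro i
        have hul : ((List.ofFn w).take i).length = i := htake i i.isLt.le
        have hctilde : ∀ a : α, ctilde n P L S ((List.ofFn w).take i ++ [a])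
            = efg n P L ((List.ofFn w).take i ++ [a]) := fun a =>
          ctilde_eq_efg n P L S hL hpos hSL hLS hmarg _
            (by simp only [List.length_append, hul, List.length_cons, List.length_nil]; omega)
        rw [Finset.sum_congr rfl (fun a _ => by rw [hctilde a]), hctilde (w i),
          sum_cond_efg n P L hmarg _ (by rw [hul]; exact i.isLt),
          cond, efg, efg,
          chain _ _ _ (hmarg ((List.ofFn w).take i ++ [w i])
            (by simp only [List.length_append, hul, List.length_cons, List.length_nil]; omega)).ne',
          chain2 _ _ _ (hmarg _ (by rw [hul]; exact i.isLt.le)).ne',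
          show (List.ofFn w).take i ++ [w i] = (List.ofFn w).take ((i : ℕ) + 1) from
            (take_succ_ofFn w i).symm]
      rw [QtildeS, Finset.prod_congr rfl (fun i _ => hfac i),
        Fin.prod_univ_eq_prod_range (fun i => g (i + 1) / g i) n,
        prod_div_telescope g n hgne]
      simp only [hg]
      rw [List.take_of_length_le (by simp), List.take_zero,
        margL_full n P L _ (by simp)]
      rfl
    · have hn : 0 < n := by
        by_contra h
        have hn0 : n = 0 := by omega
        subst hn0
        have hnil : List.ofFn w = [] := List.eq_nil_of_length_eq_zero (by simp)
        rw [PL, margL_full 0 P L [] rfl] at hPL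
        by_cases h0 : [] ∈ L
        · exact hw (by rw [hnil]; exact h0)
        · rw [Set.indicator_of_notMem h0] at hPL; exact lt_irrefl 0 hPL
      have hnotpre : ¬ inPrefix L (List.ofFn w) := by
        rintro ⟨v, hv⟩
        have := hL _ hv
        simp only [List.length_append, List.length_ofFn] at this
        have hv0 : v = [] := List.eq_nil_of_length_eq_zero (by omega)
        subst hv0
        rw [List.append_nil] at hv
        exact hw hv
      rw [Set.indicator_of_notMem hw, zero_div, QtildeS]
      refine Finset.prod_eq_zero (Finset.mem_univ (⟨n - 1, by omega⟩ : Fin n)) ?_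
      have hkey : ctilde n P L S
          ((List.ofFn w).take ((⟨n - 1, by omega⟩ : Fin n) : ℕ) ++ [w ⟨n - 1, by omega⟩]) = 0 := by
        rw [← take_succ_ofFn w ⟨n - 1, by omega⟩,
          show ((⟨n - 1, by omega⟩ : Fin n) : ℕ) + 1 = n by simp; omega,
          List.take_of_length_le (by simp), ctilde]
        exact ctildeAux_eq_zero n P L S hSL _ hnotpre _
      rw [hkey, mul_zero, zero_div]


end GAD
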